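/- Let M be a Maya diagram and let k ≥ 1 be an integer. For i = 0,…,k−1 let M^{(i)} := {m ∈ ℤ : km + i ∈ M} be the k-modular decomposition of M. Then each M^{(i)} is a Maya diagram, and card((M+k) ⊖ M) = Σ_{i=0}^{k−1} card((M^{(i)}+1) ⊖ M^{(i)}). In particular, if g_i denotes the genus of M^{(i)} (so card((M^{(i)}+1) ⊖ M^{(i)}) = 2g_i + 1), then M is (p,k)-cyclic with p = (2g_0+1) + ⋯ + (2g_{k−1}+1): flipping M at every element of the finite set (M+k) ⊖ M transforms M into M+k, and this set has cardinality p. -/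

import Mathlib

lemma img_mem (S : Set ℤ) (c m : ℤ) : m ∈ (fun x => x + c) '' S ↔ m - c ∈ S := by
  constructor
  · rintro ⟨x, hx, rfl⟩; simpa using hx
  · intro h; exact ⟨m - c, h, by ring⟩

theorem maya_modular_decomposition (M : Set ℤ)
    (h1 : {m ∈ M | 0 ≤ m}.Finite)
    (h2 : {m : ℤ | m < 0 ∧ m ∉ M}.Finite)
    (k : ℕ) (hk : 1 ≤ k) :
    (∀ i < k,
      {m ∈ {x : ℤ | (k : ℤ) * x + (i : ℤ) ∈ M} | 0 ≤ m}.Finite ∧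
      {m : ℤ | m < 0 ∧ m ∉ {x : ℤ | (k : ℤ) * x + (i : ℤ) ∈ M}}.Finite) ∧
    (symmDiff ((fun x => x + (k : ℤ)) '' M) M).Finite ∧
    (symmDiff ((fun x => x + (k : ℤ)) '' M) M).ncard =
      ∑ i ∈ Finset.range k,
        (symmDiff ((fun x => x + 1) '' {x : ℤ | (k : ℤ) * x + (i : ℤ) ∈ M})
          {x : ℤ | (k : ℤ) * x + (i : ℤ) ∈ M}).ncard ∧
    symmDiff M (symmDiff ((fun x => x + (k : ℤ)) '' M) M) = (fun x => x + (k : ℤ)) '' M := by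
  have hk0 : (0:ℤ) < (k:ℤ) := by exact_mod_cast hk
  have hkne : ((k:ℤ)) ≠ 0 := ne_of_gt hk0
  set D := symmDiff ((fun x => x + (k : ℤ)) '' M) M with hD
  have hmemD : ∀ m : ℤ, m ∈ D ↔ (m - k ∈ M ∧ m ∉ M) ∨ (m ∈ M ∧ m - k ∉ M) := by
    intro m
    rw [hD, Set.mem_symmDiff, img_mem]
  -- injectivity of f_i
  have hinj : ∀ i : ℕ, Function.Injective (fun x : ℤ => (k:ℤ) * x + (i:ℤ)) := by
    intro i a b hab
    simp only at hab
    have : (k:ℤ) * a = (k:ℤ) * b := by omega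
    exact mul_left_cancel₀ hkne this
  -- each component Maya
  have hMaya : ∀ i < k,
      {m ∈ {x : ℤ | (k : ℤ) * x + (i : ℤ) ∈ M} | 0 ≤ m}.Finite ∧
      {m : ℤ | m < 0 ∧ m ∉ {x : ℤ | (k : ℤ) * x + (i : ℤ) ∈ M}}.Finite := by
    intro i hi
    constructor
    · apply (h1.preimage ((hinj i).injOn)).subset
      rintro m ⟨hm, hm0⟩
      simp only [Set.mem_preimage, Set.mem_setOf_eq]
      have h0 : (0:ℤ) ≤ (k:ℤ) * m := mul_nonneg (le_of_lt hk0) hm0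
      have h0' : (0:ℤ) ≤ (i:ℤ) := Int.natCast_nonneg i
      exact ⟨hm, by omega⟩
    · apply (h2.preimage ((hinj i).injOn)).subset
      rintro m ⟨hm0, hm⟩
      simp only [Set.mem_preimage, Set.mem_setOf_eq]
      have h1' : (k:ℤ) * m ≤ -(k:ℤ) := by nlinarith
      have hik : (i:ℤ) < (k:ℤ) := by exact_mod_cast hi
      exact ⟨by omega, hm⟩
  -- finiteness of D
  have hDfin : D.Finite := by
    apply Set.Finite.subset
      ((((h1.image (fun x => x + (k:ℤ))).union h1).union
        ((h2.image (fun x => x + (k:ℤ))).union h2)).union (Set.finite_Ico 0 (k:ℤ)))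
    intro m hm
    rw [hmemD] at hm
    simp only [Set.mem_union, Set.mem_image, Set.mem_setOf_eq, Set.mem_Ico]
    rcases hm with ⟨hmk, hm⟩ | ⟨hm, hmk⟩
    · by_cases h0 : 0 ≤ m - k
      · exact Or.inl (Or.inl (Or.inl ⟨m - k, ⟨hmk, h0⟩, by ring⟩))
      · by_cases h0' : m < 0
        · exact Or.inl (Or.inr (Or.inr ⟨h0', hm⟩))
        · exact Or.inr ⟨by omega, by omega⟩
    · by_cases h0 : 0 ≤ m
      · exact Or.inl (Or.inl (Or.inr ⟨hm, h0⟩))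
      · exact Or.inl (Or.inr (Or.inl ⟨m - k, ⟨by omega, hmk⟩, by ring⟩))
  refine ⟨hMaya, hDfin, ?_, ?_⟩
  · -- counting
    classical
    set F := hDfin.toFinset with hF
    have hcard : D.ncard = F.card := Set.ncard_eq_toFinset_card D hDfin
    -- key: component symmDiff is preimage of D
    have hcomp : ∀ i : ℕ,
        symmDiff ((fun x => x + 1) '' {x : ℤ | (k : ℤ) * x + (i : ℤ) ∈ M})
          {x : ℤ | (k : ℤ) * x + (i : ℤ) ∈ M}
        = (fun x : ℤ => (k:ℤ) * x + (i:ℤ)) ⁻¹' D := by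
      intro i
      ext x
      rw [Set.mem_symmDiff, img_mem, Set.mem_preimage, hmemD]
      have e : (k:ℤ) * (x - 1) + (i:ℤ) = ((k:ℤ) * x + (i:ℤ)) - k := by ring
      simp only [Set.mem_setOf_eq, e]
    rw [hcard]
    rw [Finset.card_eq_sum_card_fiberwise
      (f := fun n : ℤ => (n % (k:ℤ)).toNat) (t := Finset.range k)
      (fun n _ => by
        have := Int.emod_nonneg n hkne
        have := Int.emod_lt_of_pos n hk0
        simp only [Finset.mem_coe, Finset.mem_range]
        omega)]
    apply Finset.sum_congr rfl
    intro i hi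
    rw [Finset.mem_range] at hi
    rw [hcomp i]
    have hfin' : ((fun x : ℤ => (k:ℤ) * x + (i:ℤ)) ⁻¹' D).Finite :=
      hDfin.preimage ((hinj i).injOn)
    rw [← Set.ncard_image_of_injective _ (hinj i)]
    rw [Set.image_preimage_eq_inter_range]
    have : D ∩ Set.range (fun x : ℤ => (k:ℤ) * x + (i:ℤ))
        = ↑(F.filter (fun n => (n % (k:ℤ)).toNat = i)) := by
      ext n
      simp only [Set.mem_inter_iff, Set.mem_range, Finset.coe_filter,
        Set.mem_setOf_eq, hF, Set.Finite.mem_toFinset]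
      constructor
      · rintro ⟨hn, x, hx⟩
        refine ⟨hn, ?_⟩
        have hik : (i:ℤ) < (k:ℤ) := by exact_mod_cast hi
        have : n % (k:ℤ) = (i:ℤ) := by
          rw [← hx, add_comm, Int.add_mul_emod_self_left]
          exact Int.emod_eq_of_lt (Int.natCast_nonneg i) hik
        omega
      · rintro ⟨hn, hx⟩
        refine ⟨hn, n / (k:ℤ), ?_⟩
        have := Int.emod_nonneg n hkne
        have := Int.mul_ediv_add_emod n (k:ℤ)
        omega
    rw [this, Set.ncard_coe_finset]
  · rw [hD, symmDiff_comm ((fun x => x + (k:ℤ)) '' M) M]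
    exact symmDiff_symmDiff_cancel_left M _
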